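/- In the setting of the previous statement (U = VR full rank, û_j = Vᵀu_j for j ≤ n-1, D_j = u_0ᵀu_j), the later data matrices are also determined by the ROM: D_{n-1+j} = 2 û_{n-1}ᵀ û_j − D_{n-1-j} for j = 1, ..., n-1. -/
import Mathlib


open Matrix

/-- Later data matrices are determined by the ROM: in the setting of data
interpolation (`U = V R` full rank, `û_j = Vᵀ u_j`, `D_j = u_0ᵀ u_j`),
`D_{n-1+j} = 2 û_{n-1}ᵀ û_j − D_{n-1-j}` for `j = 1,…,n-1`. -/
theorem stmt_12 {N : Type*} [Fintype N] [DecidableEq N] {nn k : ℕ}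
    (A Q : Matrix N N ℝ) (θ : N → ℝ)
    (hQ : Q * Qᵀ = 1) (hQ' : Qᵀ * Q = 1)
    (hθ : ∀ i, 0 ≤ θ i)
    (hA : A = Q * Matrix.diagonal θ * Qᵀ)
    (hApsd : A.PosSemidef)
    (F : ℝ → Matrix N N ℝ)
    (hF : ∀ t, F t = Q * Matrix.diagonal (fun i => Real.cos (t * Real.sqrt (θ i))) * Qᵀ)
    (τ : ℝ) (hτ : 0 < τ)
    (u0 : Matrix N (Fin k) ℝ) (u : ℕ → Matrix N (Fin k) ℝ)
    (hu : ∀ j : ℕ, u j = F (j * τ) * u0)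
    (U : Matrix N (Fin nn × Fin k) ℝ)
    (hUdef : ∀ i (j : Fin nn) (l : Fin k), U i (j, l) = u j i l)
    (hrank : U.rank = Fintype.card (Fin nn × Fin k))
    (V : Matrix N (Fin nn × Fin k) ℝ) (R : Matrix (Fin nn × Fin k) (Fin nn × Fin k) ℝ)
    (hV : Vᵀ * V = 1) (hUVR : U = V * R)
    (D : ℕ → Matrix (Fin k) (Fin k) ℝ)
    (hD : ∀ j : ℕ, D j = u0ᵀ * u j) :
    ∀ j : ℕ, 1 ≤ j → j ≤ nn - 1 →
      D (nn - 1 + j) =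
        (2 : ℝ) • ((Vᵀ * u (nn - 1))ᵀ * (Vᵀ * u j)) - D (nn - 1 - j) := by
  intro j hj1 hj2
  have hnn2 : 2 ≤ nn := by omega
  -- F is symmetric
  have hFt : ∀ t, (F t)ᵀ = F t := by
    intro t
    rw [hF t, Matrix.transpose_mul, Matrix.transpose_mul, Matrix.transpose_transpose,
      Matrix.diagonal_transpose, Matrix.mul_assoc]
  -- product formula
  have hFF : ∀ a b : ℕ, b ≤ a →
      F (a * τ) * F (b * τ) = (2 : ℝ)⁻¹ • (F ((a + b : ℕ) * τ) + F ((a - b : ℕ) * τ)) := by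
    intro a b hba
    rw [hF, hF, hF, hF]
    have key : (Matrix.diagonal (fun i => Real.cos ((a : ℝ) * τ * Real.sqrt (θ i))) :
        Matrix N N ℝ) * Matrix.diagonal (fun i => Real.cos ((b : ℝ) * τ * Real.sqrt (θ i)))
        = (2 : ℝ)⁻¹ • (Matrix.diagonal (fun i => Real.cos (((a + b : ℕ) : ℝ) * τ * Real.sqrt (θ i)))
          + Matrix.diagonal (fun i => Real.cos (((a - b : ℕ) : ℝ) * τ * Real.sqrt (θ i)))) := by
      rw [Matrix.diagonal_mul_diagonal]
      ext i i'
      rcases eq_or_ne i i' with rfl | h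
      swap
      · simp [Matrix.diagonal_apply_ne _ h, h]
      simp only [Matrix.diagonal_apply_eq, Matrix.smul_apply, Matrix.add_apply,
        Matrix.diagonal_apply_eq, smul_eq_mul]
      have h1 : ((a + b : ℕ) : ℝ) * τ * Real.sqrt (θ i)
          = (a : ℝ) * τ * Real.sqrt (θ i) + (b : ℝ) * τ * Real.sqrt (θ i) := by
        push_cast; ring
      have h2 : ((a - b : ℕ) : ℝ) * τ * Real.sqrt (θ i)
          = (a : ℝ) * τ * Real.sqrt (θ i) - (b : ℝ) * τ * Real.sqrt (θ i) := by
        rw [Nat.cast_sub hba]; ring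
      rw [h1, h2, Real.cos_add, Real.cos_sub]
      ring
    calc Q * Matrix.diagonal (fun i => Real.cos ((a : ℝ) * τ * Real.sqrt (θ i))) * Qᵀ *
          (Q * Matrix.diagonal (fun i => Real.cos ((b : ℝ) * τ * Real.sqrt (θ i))) * Qᵀ)
        = Q * ((Matrix.diagonal (fun i => Real.cos ((a : ℝ) * τ * Real.sqrt (θ i))) *
            Matrix.diagonal (fun i => Real.cos ((b : ℝ) * τ * Real.sqrt (θ i)))) * Qᵀ) := by
          rw [Matrix.mul_assoc, Matrix.mul_assoc, Matrix.mul_assoc]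
          congr 1
          rw [← Matrix.mul_assoc Qᵀ Q, hQ', Matrix.one_mul, Matrix.mul_assoc]
      _ = _ := by
          rw [key]
          simp only [Matrix.mul_smul, Matrix.smul_mul, Matrix.add_mul, Matrix.mul_add,
            Matrix.mul_assoc]
  -- key inner-product identity
  have huu : ∀ a b : ℕ, b ≤ a →
      (u a)ᵀ * u b = (2 : ℝ)⁻¹ • (D (a + b) + D (a - b)) := by
    intro a b hba
    rw [hu a, hu b, Matrix.transpose_mul, hFt, Matrix.mul_assoc, ← Matrix.mul_assoc (F _),
      hFF a b hba, hD, hD, hu, hu]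
    simp only [Matrix.smul_mul, Matrix.mul_smul, Matrix.add_mul, Matrix.mul_add,
      Matrix.mul_assoc]
  -- V Vᵀ fixes all snapshots
  have hVVU : V * Vᵀ * U = U := by
    rw [hUVR, ← Matrix.mul_assoc, Matrix.mul_assoc V Vᵀ V, hV, Matrix.mul_one]
  have hVVu : ∀ m : ℕ, m < nn → V * Vᵀ * u m = u m := by
    intro m hm
    ext i l
    have := congrFun (congrFun hVVU i) (⟨m, hm⟩, l)
    simp only [Matrix.mul_apply] at this ⊢
    simpa only [hUdef] using this
  have hub : (Vᵀ * u (nn - 1))ᵀ * (Vᵀ * u j) = (u (nn - 1))ᵀ * u j := by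
    rw [Matrix.transpose_mul, Matrix.transpose_transpose, Matrix.mul_assoc,
      ← Matrix.mul_assoc V Vᵀ (u j), hVVu j (by omega)]
  rw [hub, huu (nn - 1) j (by omega), smul_smul]
  norm_num
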